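/- arXiv:1210.4421 — 15 statements merged into one kernel-verified Lean document; each statement's English description precedes it below -/
import Mathlib

section
/- Let S be a right generalized inverse semigroup, let e ∈ S be an idempotent, and let a, b ∈ S satisfy a·e = a and b·e = b. If V(a) ∩ V(b) ≠ ∅, then a = b. -/
/-- `t` is a (von Neumann) inverse of `s`. -/
def IsInvOf {S : Type*} [Semigroup S] (t s : S) : Prop :=
  s * t * s = s ∧ t * s * t = t

/-- `e` is an idempotent. -/
def IsIdem {S : Type*} [Semigroup S] (e : S) : Prop := e * e = e

/-- A right generalized inverse semigroup: every element is regular, the product of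
idempotents is idempotent, and idempotents satisfy the right normality law `e*f*g = f*e*g`. -/
structure IsRGIS (S : Type*) [Semigroup S] : Prop where
  regular : ∀ s : S, ∃ t, IsInvOf t s
  idem_mul : ∀ e f : S, IsIdem e → IsIdem f → IsIdem (e * f)
  right_normal : ∀ e f g : S, IsIdem e → IsIdem f → IsIdem g → e * f * g = f * e * g

/-- A right ∗-semigroup structure: axioms (S1)-(S4). -/
structure IsRightStar (S : Type*) [Semigroup S] (star : S → S) : Prop where
  s1 : ∀ s : S, star (star s) = s
  s2 : ∀ s : S, IsInvOf (star s) s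
  s3 : ∀ s t : S, star (s * t) = star t * star (s * t * star t)
  s4 : ∀ e : S, IsIdem e → star e = e

/-- An inverse semigroup: `inv s` is an inverse of `s`, and inverses are unique. -/
structure IsInverseSemigroup (S : Type*) [Semigroup S] (inv : S → S) : Prop where
  inv_spec : ∀ s : S, IsInvOf (inv s) s
  inv_unique : ∀ s t : S, IsInvOf t s → t = inv s

/-- The relation γ : `a γ b` iff `V(a) ∩ V(b) ≠ ∅`. -/
def GammaRel {S : Type*} [Semigroup S] (a b : S) : Prop :=
  ∃ t, IsInvOf t a ∧ IsInvOf t b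

/-- The natural partial order on a regular semigroup. -/
def NatLe {S : Type*} [Semigroup S] (a b : S) : Prop :=
  ∃ e f : S, IsIdem e ∧ IsIdem f ∧ a = e * b ∧ a = b * f

/-- Green's L relation. -/
def GreenL {S : Type*} [Semigroup S] (a b : S) : Prop :=
  a = b ∨ ∃ x y : S, a = x * b ∧ b = y * a

/-- An étale homomorphism: for every idempotent `e` of `T`, `θ` restricts to a bijection
from `T·e` onto `S·θ(e)`. -/
def IsEtaleHom {T S : Type*} [Semigroup T] [Semigroup S] (θ : T → S) : Prop :=
  ∀ e : T, IsIdem e →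
    (∀ a b : T, a * e = a → b * e = b → θ a = θ b → a = b) ∧
    (∀ s : S, s * θ e = s → ∃ a : T, a * e = a ∧ θ a = s)

/-- Lemma 2.1(1): In a right generalized inverse semigroup, if `a, b ∈ Se` and
`V(a) ∩ V(b) ≠ ∅` then `a = b`. -/
theorem rgis_cancel_of_gamma {S : Type*} [Semigroup S] (h : IsRGIS S)
    (e a b : S) (he : IsIdem e) (ha : a * e = a) (hb : b * e = b)
    (hab : GammaRel a b) : a = b := by
  obtain ⟨t, ⟨hata, htat⟩, ⟨hbtb, htbt⟩⟩ := hab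
  have hita : IsIdem (t * a) := by
    show t * a * (t * a) = t * a
    calc t * a * (t * a) = t * (a * t * a) := by simp only [mul_assoc]
    _ = t * a := by rw [hata]
  have hitb : IsIdem (t * b) := by
    show t * b * (t * b) = t * b
    calc t * b * (t * b) = t * (b * t * b) := by simp only [mul_assoc]
    _ = t * b := by rw [hbtb]
  have hiat : IsIdem (a * t) := by
    show a * t * (a * t) = a * t
    calc a * t * (a * t) = (a * t * a) * t := by simp only [mul_assoc]
    _ = a * t := by rw [hata]
  have hibt : IsIdem (b * t) := by
    show b * t * (b * t) = b * t
    calc b * t * (b * t) = (b * t * b) * t := by simp only [mul_assoc]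
    _ = b * t := by rw [hbtb]
  have key1 := h.right_normal (t * b) (t * a) e hitb hita he
  simp only [mul_assoc] at key1
  rw [ha, hb] at key1
  -- key1 : t * (b * (t * a)) = t * (a * (t * b))
  have hatb : a = a * (t * b) := by
    calc a = a * t * a := hata.symm
    _ = a * (t * b * t) * a := by rw [htbt]
    _ = a * (t * (b * (t * a))) := by simp only [mul_assoc]
    _ = a * (t * (a * (t * b))) := by rw [key1]
    _ = (a * t * a) * (t * b) := by simp only [mul_assoc]
    _ = a * (t * b) := by rw [hata]
  have hbta : b = b * (t * a) := by
    calc b = b * t * b := hbtb.symm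
    _ = b * (t * a * t) * b := by rw [htat]
    _ = b * (t * (a * (t * b))) := by simp only [mul_assoc]
    _ = b * (t * (b * (t * a))) := by rw [key1]
    _ = (b * t * b) * (t * a) := by simp only [mul_assoc]
    _ = b * (t * a) := by rw [hbtb]
  have hxy : a * t * (b * t) = a * t := by
    calc a * t * (b * t) = a * (t * b) * t := by simp only [mul_assoc]
    _ = a * t := by rw [← hatb]
  have hyx : b * t * (a * t) = b * t := by
    calc b * t * (a * t) = b * (t * a) * t := by simp only [mul_assoc]
    _ = b * t := by rw [← hbta]
  have key3 := h.right_normal (a * t) (b * t) (b * t) hiat hibt hibt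
  rw [hxy, hyx, hxy, hibt] at key3
  -- key3 : a * t = b * t
  calc a = a * (t * b) := hatb
  _ = a * t * b := by simp only [mul_assoc]
  _ = b * t * b := by rw [key3]
  _ = b := hbtb
end

section
/- Let S be a right generalized inverse semigroup and a ∈ S. If V(a) ∩ V(a·a) ≠ ∅, then a = a·a. (Thus the relation γ, defined by x γ y iff V(x) ∩ V(y) ≠ ∅, is idempotent pure.) -/
/-- Lemma 2.1(2): In a right generalized inverse semigroup, if `a γ a²` then `a = a²`;
thus γ is idempotent pure. -/
theorem rgis_gamma_idempotent_pure {S : Type*} [Semigroup S] (h : IsRGIS S)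
    (a : S) (ha : GammaRel a (a * a)) : a = a * a := by
  obtain ⟨t, ⟨hta, -⟩, ⟨-, ht2⟩⟩ := ha
  calc a = a * t * a := hta.symm
    _ = a * (t * (a * a) * t) * a := by rw [ht2]
    _ = (a * t * a) * (a * t * a) := by simp only [mul_assoc]
    _ = a * a := by rw [hta]
end

section
/- Let S be a right generalized inverse semigroup and let a, e ∈ S. Suppose V(e) ∩ V(e·e) ≠ ∅ (i.e. the γ-class of e is an idempotent of S/γ) and V(a·e) ∩ V(a) ≠ ∅ (i.e. γ(a)·γ(e) = γ(a)). Then there exists b ∈ S with b·e = b and V(b) ∩ V(a) ≠ ∅. -/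
/-- Lemma 2.1(3): If `γ(a)γ(e) = γ(a)` where `γ(e)` is an idempotent, then there exists
`b ∈ Se` with `γ(b) = γ(a)`. -/
theorem rgis_gamma_restrict {S : Type*} [Semigroup S] (h : IsRGIS S)
    (a e : S) (he : GammaRel e (e * e)) (hae : GammaRel (a * e) a) :
    ∃ b : S, b * e = b ∧ GammaRel b a := by
  obtain ⟨u, ⟨heue, _⟩, ⟨_, huee⟩⟩ := he
  have hee : e * e = e := by
    calc e * e = (e * u * e) * (e * u * e) := by rw [heue]
      _ = e * (u * (e * e) * u) * e := by simp only [mul_assoc]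
      _ = e * u * e := by rw [huee]
      _ = e := heue
  exact ⟨a * e, by rw [mul_assoc, hee], hae⟩
end

section
/- Let S be a right generalized inverse semigroup equipped with a unary operation s ↦ s∗ satisfying (S1) (s∗)∗ = s, (S2) s∗ ∈ V(s), and (S3) (s·t)∗ = t∗·(s·t·t∗)∗. Then (S4) holds automatically: every idempotent e of S satisfies e∗ = e. -/
/-- Lemma 2.1(5): If a unary operation on a right generalized inverse semigroup
satisfies (S1), (S2) and (S3), then (S4) holds automatically. -/
theorem rgis_star_s4 {S : Type*} [Semigroup S] (h : IsRGIS S) (star : S → S)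
    (s1 : ∀ s : S, star (star s) = s)
    (s2 : ∀ s : S, IsInvOf (star s) s)
    (s3 : ∀ s t : S, star (s * t) = star t * star (s * t * star t)) :
    ∀ e : S, IsIdem e → star e = e := by
  have key : ∀ s : S, star (s * star s) = s * star s := by
    intro s
    have h3 := s3 s (star s)
    rw [s1, (s2 s).1] at h3
    exact h3
  intro e he
  have hfix : star (star e * e) = star e * e := by
    have hk := key (star e)
    rwa [s1] at hk
  have hf : IsIdem (star e * e) := by
    unfold IsIdem
    rw [mul_assoc, ← mul_assoc e (star e) e, (s2 e).1]
  have hg : IsIdem (e * star e) := by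
    unfold IsIdem
    rw [mul_assoc, ← mul_assoc (star e) e (star e), (s2 e).2]
  have hn := h.right_normal e (star e * e) (e * star e) he hf hg
  have hL : e * (star e * e) * (e * star e) = e * star e := by
    rw [← mul_assoc e (star e) e, (s2 e).1, ← mul_assoc, he]
  have hR : (star e * e) * e * (e * star e) = star e := by
    rw [mul_assoc (star e) e e, he, ← mul_assoc, mul_assoc (star e) e e, he]
    exact (s2 e).2
  have hge : e * star e = star e := hL.symm.trans (hn.trans hR)
  have h4 : star e * e = e := by
    rw [show star e = e * star e from hge.symm]
    exact (s2 e).1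
  calc star e = star (star e * e) := by rw [h4]
    _ = star e * e := hfix
    _ = e := h4
end

section
/- Let S be a right generalized inverse ∗-semigroup and a, b ∈ S. Then a ≤ b in the natural partial order if and only if a∗ ≤ b∗. -/
theorem rgis_star_mono {S : Type*} [Semigroup S] (h : IsRGIS S)
    (star : S → S) (hstar : IsRightStar S star) (a b : S)
    (hab : NatLe a b) : NatLe (star a) (star b) := by
  obtain ⟨e, f, he, hf, hl, hr⟩ := hab
  have hbb : IsIdem (b * star b) := by
    have := (hstar.s2 b).1
    show b * star b * (b * star b) = b * star b
    calc b * star b * (b * star b) = (b * star b * b) * star b := by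
          simp [mul_assoc]
      _ = b * star b := by rw [this]
  have hX : IsIdem (e * (b * star b)) := h.idem_mul _ _ he hbb
  have hsa : star a = star b * (e * (b * star b)) := by
    have h3 := hstar.s3 e b
    have h4 : star (e * b * star b) = e * (b * star b) := by
      rw [show e * b * star b = e * (b * star b) from mul_assoc _ _ _]
      exact hstar.s4 _ hX
    rw [hl, h3, h4]
  have haa : IsIdem (star a * a) := by
    show star a * a * (star a * a) = star a * a
    calc star a * a * (star a * a) = star a * (a * star a * a) := by
          simp [mul_assoc]
      _ = star a * a := by rw [(hstar.s2 a).1]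
  have habX : a * star b = e * (b * star b) := by
    rw [hl, mul_assoc]
  have key : star a = star a * a * star b := by
    calc star a = star b * (e * (b * star b)) := hsa
      _ = star b * (e * (b * star b) * (e * (b * star b))) := by rw [hX]
      _ = star b * (e * (b * star b)) * (a * star b) := by
          rw [habX]; simp [mul_assoc]
      _ = star a * a * star b := by rw [← hsa, mul_assoc]
  exact ⟨star a * a, e * (b * star b), haa, hX, key, hsa⟩

/-- Lemma 2.2(1): In a right generalized inverse ∗-semigroup,
`a ≤ b` if and only if `a∗ ≤ b∗`. -/
theorem rgis_star_natLe_iff {S : Type*} [Semigroup S] (h : IsRGIS S)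
    (star : S → S) (hstar : IsRightStar S star) (a b : S) :
    NatLe a b ↔ NatLe (star a) (star b) := by
  constructor
  · exact rgis_star_mono h star hstar a b
  · intro hs
    have := rgis_star_mono h star hstar (star a) (star b) hs
    rwa [hstar.s1, hstar.s1] at this
end

section
/- Let S be a right generalized inverse ∗-semigroup and a, b ∈ S. Then the following are equivalent: (i) a ≤ b in the natural partial order; (ii) a = a·a∗·b; (iii) a∗ = a∗·a·b∗. -/
/-- Lemma 2.2(2): In a right generalized inverse ∗-semigroup, `a ≤ b` iff
`a = a·a∗·b` iff `a∗ = a∗·a·b∗`. -/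
theorem rgis_star_natLe_char {S : Type*} [Semigroup S] (h : IsRGIS S)
    (star : S → S) (hstar : IsRightStar S star) (a b : S) :
    (NatLe a b ↔ a = a * star a * b) ∧
    (NatLe a b ↔ star a = star a * a * star b) := by
  have haa : ∀ s : S, s * star s * s = s := fun s => (hstar.s2 s).1
  have ha'a : ∀ s : S, star s * s * star s = star s := fun s => (hstar.s2 s).2
  have idemR : ∀ s : S, IsIdem (s * star s) := fun s => by
    show s * star s * (s * star s) = s * star s
    rw [← mul_assoc, haa]
  have idemL : ∀ s : S, IsIdem (star s * s) := fun s => by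
    show star s * s * (star s * s) = star s * s
    rw [← mul_assoc, ha'a]
  have H1 : NatLe a b → a = a * star a * b := by
    rintro ⟨e, f, he, hf, hae, haf⟩
    have hf' : star a = f * star a := by
      have hs := hstar.s3 b f
      rw [hstar.s4 f hf, mul_assoc b f f, hf, ← haf] at hs
      exact hs
    have h2 : a * star a = b * star a := by
      calc a * star a = b * f * star a := by rw [← haf]
        _ = b * (f * star a) := mul_assoc b f (star a)
        _ = b * star a := by rw [← hf']
    have h3 : e * (a * star a) = a * star a := by
      calc e * (a * star a) = e * (b * star a) := by rw [h2]
        _ = e * b * star a := (mul_assoc e b (star a)).symm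
        _ = a * star a := by rw [← hae]
    calc a = a * star a * a := (haa a).symm
      _ = a * star a * (e * b) := by rw [← hae]
      _ = a * star a * (e * (b * star b * b)) := by rw [haa b]
      _ = a * star a * e * (b * star b) * b := by simp only [mul_assoc]
      _ = e * (a * star a) * (b * star b) * b := by
            rw [h.right_normal (a * star a) e (b * star b) (idemR a) he (idemR b)]
      _ = a * star a * (b * star b * b) := by rw [h3]; simp only [mul_assoc]
      _ = a * star a * b := by rw [haa b]
  have H2 : a = a * star a * b → star a = star a * a * star b := by
    intro hab
    have hc : a * star b = a * star a * (b * star b) := by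
      calc a * star b = a * star a * b * star b := by nth_rewrite 1 [hab]; rfl
        _ = a * star a * (b * star b) := mul_assoc _ _ _
    have hcidem : IsIdem (a * star b) := by
      rw [hc]; exact h.idem_mul _ _ (idemR a) (idemR b)
    have ha' : star a = star b * (a * star b) := by
      have hs := hstar.s3 (a * star a) b
      rw [← hab, hstar.s4 _ hcidem] at hs
      exact hs
    have h1 : star a * a = star a * b := by
      calc star a * a = star a * (a * star a * b) := by rw [← hab]
        _ = star a * a * star a * b := by simp only [mul_assoc]
        _ = star a * b := by rw [ha'a a]
    have key : star a * (b * star b) = star a := by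
      calc star a * (b * star b) = star b * (a * star b) * (b * star b) := by rw [ha']
        _ = star b * (a * (star b * (b * star b))) := by simp only [mul_assoc]
        _ = star b * (a * star b) := by rw [← mul_assoc (star b) b (star b), ha'a b]
        _ = star a := ha'.symm
    calc star a = star a * (b * star b) := key.symm
      _ = star a * b * star b := (mul_assoc (star a) b (star b)).symm
      _ = star a * a * star b := by rw [← h1]
  have H3 : star a = star a * a * star b → NatLe a b := by
    intro h3
    have hsab : star a * b = star a * a * (star b * b) := by
      calc star a * b = star a * a * star b * b := by rw [← h3]
        _ = star a * a * (star b * b) := mul_assoc _ _ _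
    have hidem2 : IsIdem (star a * b) := by
      rw [hsab]; exact h.idem_mul _ _ (idemL a) (idemL b)
    have hA : a = b * (star a * b) := by
      have hs := hstar.s3 (star a * a) (star b)
      rw [hstar.s1 b] at hs
      rw [← h3] at hs
      rw [hstar.s1 a] at hs
      rw [hstar.s4 _ hidem2] at hs
      exact hs
    have hii : a * star a = a * star b := by
      calc a * star a = a * (star a * a * star b) := by rw [← h3]
        _ = a * star a * a * star b := by simp only [mul_assoc]
        _ = a * star b := by rw [haa a]
    have hbb : a * (star b * b) = a := by
      conv_lhs => rw [hA]
      calc b * (star a * b) * (star b * b)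
          = b * (star a * (b * (star b * b))) := by simp only [mul_assoc]
        _ = b * (star a * b) := by rw [← mul_assoc b (star b) b, haa b]
        _ = a := hA.symm
    have hae : a = a * star a * b := by
      rw [hii, mul_assoc, hbb]
    exact ⟨a * star a, star a * b, idemR a, hidem2, hae, hA⟩
  exact ⟨⟨H1, fun hh => H3 (H2 hh)⟩, ⟨fun hh => H2 (H1 hh), H3⟩⟩
end

section
/- Let S be a right generalized inverse semigroup and let s, t ∈ S. If s L t (Green's L-relation) and V(s) ∩ V(t) ≠ ∅, then s = t. (This is the injectivity half of the assertion that the natural map S → S/γ is an L-cover.) -/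
/-- Proposition 2.3(1), injectivity half: in a right generalized inverse semigroup,
if `s L t` and `s γ t` then `s = t`. -/
theorem rgis_L_cover_inj {S : Type*} [Semigroup S] (h : IsRGIS S)
    (s t : S) (hl : GreenL s t) (hg : GammaRel s t) : s = t := by
  obtain ⟨u, ⟨hsus, husu⟩, ⟨htut, hutu⟩⟩ := hg
  rcases hl with rfl | ⟨x, y, hx, hy⟩
  · rfl
  · have hp : IsIdem (s * u) := by
      show s * u * (s * u) = s * u
      rw [← mul_assoc, hsus]
    have hq : IsIdem (t * u) := by
      show t * u * (t * u) = t * u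
      rw [← mul_assoc, htut]
    have hpt : s * u * t = s := by
      rw [hx, mul_assoc, mul_assoc, ← mul_assoc t u t, htut]
    have hqs : t * u * s = t := by
      rw [hy, mul_assoc, mul_assoc, ← mul_assoc s u s, hsus]
    have key := congrArg (· * t) (h.right_normal (s * u) (t * u) (t * u) hp hq hq)
    simp only [mul_assoc] at key hpt hqs htut
    calc s = s * (u * (t * (u * (t * (u * t))))) := by rw [htut, htut, hpt]
      _ = t * (u * (s * (u * (t * (u * t))))) := key
      _ = t := by rw [htut, hpt, hqs]
end

section
/- Let S be a right generalized inverse semigroup, let e ∈ S be an idempotent, let t ∈ S, and let t′ ∈ V(t). If V(t′·t) ∩ V(e) ≠ ∅, then the element t·e satisfies V(t·e) ∩ V(t) ≠ ∅ (i.e. t·e γ t) and t·e L e. (This is the surjectivity half of the assertion that the natural map S → S/γ is an L-cover.) -/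
/-- If `x` is a common inverse of idempotents `a` and `b` in a right GIS, then `b*x*a = a`. -/
lemma rgis_bxa {S : Type*} [Semigroup S] (h : IsRGIS S) (a b x : S)
    (ha : IsIdem a) (hb : IsIdem b)
    (haxa : a*x*a = a) (hxax : x*a*x = x)
    (hbxb : b*x*b = b) (hxbx : x*b*x = x) :
    b * x * a = a := by
  have hxb : x*b*(x*b) = x*b := by
    rw [mul_assoc x b (x*b), ← mul_assoc b x b, hbxb]
  have hxa : x*a*(x*a) = x*a := by
    rw [mul_assoc x a (x*a), ← mul_assoc a x a, haxa]
  have C1 : b*a*x = a*b*x := by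
    conv_lhs => rw [← hxbx]
    conv_rhs => rw [← hxbx]
    rw [← mul_assoc (b*a) (x*b) x, ← mul_assoc (a*b) (x*b) x,
        h.right_normal b a (x*b) hb ha hxb]
  have C2 : a*x*b = x*a*b := by
    calc a*x*b = a*(x*b) := mul_assoc a x b
    _ = a*(x*b)*(x*b) := by rw [mul_assoc a (x*b) (x*b), hxb]
    _ = x*b*a*(x*b) := h.right_normal a (x*b) (x*b) ha hxb hxb
    _ = x*a*b := by
        rw [← mul_assoc (x*b*a) x b, mul_assoc x b a, mul_assoc x (b*a) x, C1,
            ← mul_assoc x (a*b) x, ← mul_assoc x a b,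
            mul_assoc (x*a) b x, mul_assoc (x*a) (b*x) b, hbxb]
  have key : a = b*x*a := by
    conv_lhs => rw [← haxa]
    conv_lhs => rw [← hxbx]
    rw [← mul_assoc a (x*b) x, ← mul_assoc a x b, C2,
        mul_assoc (x*a) b x, mul_assoc (x*a) (b*x) a, mul_assoc b x a,
        ← mul_assoc (x*a) b (x*a),
        h.right_normal (x*a) b (x*a) hxa hb hxa,
        mul_assoc b (x*a) (x*a), hxa, ← mul_assoc b x a]
  exact key.symm

/-- Proposition 2.3(1), surjectivity half: if `e` is idempotent, `t' ∈ V(t)` and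
`t'·t γ e`, then `t·e γ t` and `t·e L e`. -/
theorem rgis_L_cover_surj {S : Type*} [Semigroup S] (h : IsRGIS S)
    (e t t' : S) (he : IsIdem e) (ht' : IsInvOf t' t)
    (hg : GammaRel (t' * t) e) :
    GammaRel (t * e) t ∧ GreenL (t * e) e := by
  obtain ⟨ht1, ht2⟩ := ht'
  obtain ⟨x, hxf, hxe⟩ := hg
  obtain ⟨hfxf, hxfx⟩ := hxf
  obtain ⟨hexe, hxex⟩ := hxe
  set f := t' * t with hfdef
  have hf_idem : f * f = f := by
    rw [hfdef, mul_assoc t' t (t'*t), ← mul_assoc t t' t, ht1]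
  have htf : t * f = t := by rw [hfdef, ← mul_assoc, ht1]
  have hexf : e * x * f = f := rgis_bxa h f e x hf_idem he hfxf hxfx hexe hxex
  have hfxe : f * x * e = e := rgis_bxa h e f x he hf_idem hexe hxex hfxf hxfx
  have hfe : f * e = e := by
    conv_lhs => rw [← hfxe]
    rw [← mul_assoc f (f*x) e, ← mul_assoc f f x, hf_idem, hfxe]
  have inv_t : IsInvOf (x * t') t := by
    constructor
    · rw [← mul_assoc t x t', mul_assoc (t*x) t' t, ← hfdef]
      conv_lhs => rw [← htf]
      rw [mul_assoc t f x, mul_assoc t (f*x) f, hfxf, htf]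
    · rw [mul_assoc x t' t, ← hfdef, ← mul_assoc (x*f) x t', hxfx]
  have inv_te : IsInvOf (x * t') (t * e) := by
    constructor
    · rw [← mul_assoc (t*e) x t', ← mul_assoc (t*e*x*t') t e,
          mul_assoc (t*e*x) t' t, ← hfdef, mul_assoc t e x, mul_assoc t (e*x) f,
          hexf, htf]
    · rw [← mul_assoc (x*t') t e, mul_assoc x t' t, ← hfdef,
          mul_assoc x f e, hfe, ← mul_assoc (x*e) x t', hxex]
  refine ⟨⟨x * t', inv_te, inv_t⟩, Or.inr ⟨t, e*(x*t'), rfl, ?_⟩⟩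
  have : (e*(x*t'))*(t*e) = e := by
    rw [← mul_assoc e x t', ← mul_assoc (e*x*t') t e, mul_assoc (e*x) t' t,
        ← hfdef, hexf, hfe]
  exact this.symm
end

section
/- Let S be a right generalized inverse semigroup. (i) For any s ∈ S and any s′, s″ ∈ V(s), one has s′·s = s″·s, so the map κ : S → 𝒫(S) × S, κ(s) = (V(s), s′·s) for any s′ ∈ V(s), is well defined. (ii) κ is injective: if V(s) = V(t) and s′·s = t′·t for some s′ ∈ V(s), t′ ∈ V(t), then s = t. (iii) The image of κ is exactly the set of pairs (V(t), e) where t ∈ S, e is an idempotent of S, and V(t′·t) ∩ V(e) ≠ ∅ for some t′ ∈ V(t). Hence κ gives a bijection between S and the subset of S/γ × E(S) consisting of pairs (γ(s), e) with s′·s γ e. -/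
section RgisHelpers
variable {S : Type*} [Semigroup S]

theorem idem_vl {t s : S} (h : IsInvOf t s) : IsIdem (t * s) := by
  unfold IsIdem; rw [← mul_assoc, h.2]

theorem idem_vr {t s : S} (h : IsInvOf t s) : IsIdem (s * t) := by
  unfold IsIdem; rw [← mul_assoc, h.1]

theorem inv_mul_eq (h : IsRGIS S) {s s' s'' : S} (h1 : IsInvOf s' s) (h2 : IsInvOf s'' s) :
    s' * s = s'' * s := by
  have he := idem_vl h1
  have hf := idem_vl h2
  have hef : s' * s * (s'' * s) = s' * s := by
    rw [mul_assoc, ← mul_assoc s s'' s, h2.1]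
  have hfe : s'' * s * (s' * s) = s'' * s := by
    rw [mul_assoc, ← mul_assoc s s' s, h1.1]
  calc s' * s = s' * s * (s'' * s) * (s'' * s) := by rw [hef, hef]
    _ = s'' * s * (s' * s) * (s'' * s) := h.right_normal _ _ _ he hf hf
    _ = s'' * s * (s'' * s) := by rw [hfe]
    _ = s'' * s := hf

theorem band_pair (h : IsRGIS S) {a b : S} (ha : IsIdem a) (hb : IsIdem b)
    (hab : a * b * a = a) (hba : b * a * b = b) : b * a = a ∧ a * b = b := by
  constructor
  · calc b * a = b * a * a := by rw [mul_assoc, ha]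
      _ = a * b * a := h.right_normal b a a hb ha ha
      _ = a := hab
  · calc a * b = a * b * b := by rw [mul_assoc, hb]
      _ = b * a * b := h.right_normal a b b ha hb hb
      _ = b := hba

theorem kappa_inj (h : IsRGIS S) {s t s' t' : S} (hs' : IsInvOf s' s) (ht' : IsInvOf t' t)
    (hV : {u : S | IsInvOf u s} = {u : S | IsInvOf u t}) (heq : s' * s = t' * t) : s = t := by
  have hs't : IsInvOf s' t := by
    rw [Set.ext_iff] at hV; exact (hV s').1 hs'
  have hst : s' * t = s' * s := (inv_mul_eq h hs't ht').trans heq.symm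
  have hp := idem_vr hs'
  have hq := idem_vr hs't
  have hs_pt : s * s' * t = s := by rw [mul_assoc, hst, ← mul_assoc, hs'.1]
  have ht_qs : t * s' * s = t := by rw [mul_assoc, ← hst, ← mul_assoc, hs't.1]
  have hpq : s * s' * (t * s') = s * s' := by rw [← mul_assoc, hs_pt]
  have hqp : t * s' * (s * s') = t * s' := by rw [← mul_assoc, ht_qs]
  have hpq2 : s * s' = t * s' :=
    calc s * s' = s * s' * (t * s') * (t * s') := by rw [hpq, hpq]
      _ = t * s' * (s * s') * (t * s') := h.right_normal _ _ _ hp hq hq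
      _ = t * s' * (t * s') := by rw [hqp]
      _ = t * s' := hq
  calc s = s * s' * t := hs_pt.symm
    _ = t * s' * t := by rw [hpq2]
    _ = t := hs't.1

theorem kappa_surj (h : IsRGIS S) {t t' e u f : S} (ht' : IsInvOf t' t) (hF : f = t' * t)
    (he : IsIdem e) (hu1 : IsInvOf u f) (hu2 : IsInvOf u e) :
    IsInvOf (e * t') (t * e) ∧ (e * t') * (t * e) = e ∧
    {x : S | IsInvOf x t} = {x : S | IsInvOf x (t * e)} := by
  have hf : IsIdem f := hF ▸ idem_vl ht'
  have hu_idem : IsIdem u := by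
    have key : (u * f) * (f * u) = u := by
      rw [← mul_assoc, mul_assoc u f f, hf, hu1.2]
    exact key ▸ h.idem_mul _ _ (idem_vl hu1) (idem_vr hu1)
  obtain ⟨hue, heu⟩ := band_pair h he hu_idem hu2.1 hu2.2
  obtain ⟨huf, hfu⟩ := band_pair h hf hu_idem hu1.1 hu1.2
  have hfe : f * e = e := by rw [← hue, ← mul_assoc, hfu]
  have hef : e * f = f := by rw [← huf, ← mul_assoc, heu]
  have htf : t * f = t := by rw [hF, ← mul_assoc, ht'.1]
  have hs's : (e * t') * (t * e) = e := by
    rw [mul_assoc, ← mul_assoc t' t e, ← hF, ← mul_assoc, hef, hfe]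
  have hinv : IsInvOf (e * t') (t * e) := by
    constructor
    · rw [mul_assoc, hs's, mul_assoc, he]
    · rw [hs's, ← mul_assoc, he]
  have hsf : (t * e) * f = t := by rw [mul_assoc, hef, htf]
  refine ⟨hinv, hs's, ?_⟩
  ext x
  simp only [Set.mem_setOf_eq]
  constructor
  · intro hx
    have hxt : x * t = f := (inv_mul_eq h hx ht').trans hF.symm
    have hxf : f * x = x := by rw [← hxt]; exact hx.2
    have hex : e * x = x := by rw [← hxf, ← mul_assoc, hef]
    constructor
    · rw [mul_assoc t e x, hex, ← mul_assoc, hx.1]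
    · rw [← mul_assoc x t e, hxt, hfe, hex]
  · intro hy
    have hys : x * (t * e) = e := (inv_mul_eq h hy hinv).trans hs's
    have hey : e * x = x := by
      have := hy.2; rwa [hys] at this
    have hfy : f * x = x := by rw [← hey, ← mul_assoc, hfe]
    have hyt : x * t = f := by rw [← hsf, ← mul_assoc, hys, hef]
    constructor
    · rw [mul_assoc, hyt, hF, ← mul_assoc, ht'.1]
    · rw [hyt, hfy]

end RgisHelpers

/-- Proposition 2.3(2): the map `κ(s) = (V(s), s'·s)` is well defined, injective, and
its image consists exactly of the pairs `(V(t), e)` with `e` idempotent and `t'·t γ e`. -/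
theorem rgis_coordinatization {S : Type*} [Semigroup S] (h : IsRGIS S) :
    (∀ s s' s'' : S, IsInvOf s' s → IsInvOf s'' s → s' * s = s'' * s) ∧
    (∀ s t s' t' : S, IsInvOf s' s → IsInvOf t' t →
      {u : S | IsInvOf u s} = {u : S | IsInvOf u t} → s' * s = t' * t → s = t) ∧
    ({pr : Set S × S | ∃ s s' : S, IsInvOf s' s ∧
        pr = ({u : S | IsInvOf u s}, s' * s)} =
     {pr : Set S × S | ∃ t t' : S, IsInvOf t' t ∧
        pr.1 = {u : S | IsInvOf u t} ∧ IsIdem pr.2 ∧ GammaRel (t' * t) pr.2}) := by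
  refine ⟨fun s s' s'' h1 h2 => inv_mul_eq h h1 h2,
    fun s t s' t' hs' ht' hV heq => kappa_inj h hs' ht' hV heq, ?_⟩
  ext pr
  simp only [Set.mem_setOf_eq]
  constructor
  · rintro ⟨s, s', hs', rfl⟩
    have he := idem_vl hs'
    have hinv : IsInvOf (s' * s) (s' * s) := ⟨by rw [he, he], by rw [he, he]⟩
    exact ⟨s, s', hs', rfl, he, s' * s, hinv, hinv⟩
  · rintro ⟨t, t', ht', h1, he, u, hu1, hu2⟩
    obtain ⟨hinv, hmul, hset⟩ := kappa_surj h ht' rfl he hu1 hu2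
    refine ⟨t * pr.2, pr.2 * t', hinv, Prod.ext ?_ hmul.symm⟩
    exact h1.trans hset
end

section
/- Let T be a right generalized inverse ∗-semigroup, S an inverse semigroup, and θ : T → S an étale homomorphism. Then the image of θ is a left ideal of S: for every s ∈ S and every x in the range of θ, s·x is in the range of θ. -/
/-- Proposition 2.4(1): the image of an étale homomorphism from a right generalized
inverse ∗-semigroup to an inverse semigroup is a left ideal. -/
theorem etale_image_left_ideal {T S : Type*} [Semigroup T] [Semigroup S]
    (hT : IsRGIS T) (star : T → T) (hstar : IsRightStar T star)
    (inv : S → S) (hS : IsInverseSemigroup S inv)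
    (θ : T → S) (hhom : ∀ a b : T, θ (a * b) = θ a * θ b)
    (het : IsEtaleHom θ) :
    ∀ s x : S, (∃ t : T, θ t = x) → ∃ u : T, θ u = s * x := by
  rintro s x ⟨t, rfl⟩
  have hinv := hstar.s2 t
  have he : IsIdem (star t * t) := by
    show star t * t * (star t * t) = star t * t
    rw [mul_assoc (star t) t, ← mul_assoc t, hinv.1]
  have hte : t * (star t * t) = t := by rw [← mul_assoc, hinv.1]
  obtain ⟨a, -, ha⟩ := (het _ he).2 (s * θ t) (by
    rw [mul_assoc, ← hhom, hte])
  exact ⟨a, ha⟩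
end

section
/- Let T be a right generalized inverse ∗-semigroup, S an inverse semigroup, and θ : T → S a semigroup homomorphism such that for every idempotent e of T and all a, b ∈ T with a·e = a and b·e = b, θ(a) = θ(b) implies a = b. Then the kernel of θ equals γ: for all a, b ∈ T, θ(a) = θ(b) if and only if V(a) ∩ V(b) ≠ ∅. -/
/-- Proposition 2.4(2): if `θ` is injective on each `Te`, then its kernel is γ. -/
theorem etale_kernel_is_gamma {T S : Type*} [Semigroup T] [Semigroup S]
    (hT : IsRGIS T) (star : T → T) (hstar : IsRightStar T star)
    (inv : S → S) (hS : IsInverseSemigroup S inv)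
    (θ : T → S) (hhom : ∀ a b : T, θ (a * b) = θ a * θ b)
    (hinj : ∀ e : T, IsIdem e → ∀ a b : T, a * e = a → b * e = b → θ a = θ b → a = b) :
    ∀ a b : T, θ a = θ b ↔ GammaRel a b := by
  intro a b
  constructor
  · intro h
    obtain ⟨haa, hasa⟩ := hstar.s2 a
    obtain ⟨hbb, hbsb⟩ := hstar.s2 b
    -- θ maps star to inverse
    have hsa : θ (star a) = inv (θ a) :=
      hS.inv_unique _ _ ⟨by rw [← hhom, ← hhom, haa], by rw [← hhom, ← hhom, hasa]⟩
    have hsb : θ (star b) = inv (θ b) :=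
      hS.inv_unique _ _ ⟨by rw [← hhom, ← hhom, hbb], by rw [← hhom, ← hhom, hbsb]⟩
    have hee : (star a * a) * (star a * a) = star a * a := by
      rw [mul_assoc, ← mul_assoc a, haa]
    have hff : (star b * b) * (star b * b) = star b * b := by
      rw [mul_assoc, ← mul_assoc b, hbb]
    -- a = b * (star a * a)
    have hab : a = b * (star a * a) := by
      refine hinj (star a * a) hee a (b * (star a * a)) ?_ ?_ ?_
      · rw [← mul_assoc, haa]
      · rw [mul_assoc, hee]
      · rw [hhom, hhom, hsa, h, ← mul_assoc]
        exact ((hS.inv_spec (θ b)).1).symm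
    -- b = a * (star b * b)
    have hba : b = a * (star b * b) := by
      refine hinj (star b * b) hff b (a * (star b * b)) ?_ ?_ ?_
      · rw [← mul_assoc, hbb]
      · rw [mul_assoc, hff]
      · rw [hhom, hhom, hsb, h]
        nth_rewrite 1 [← ((hS.inv_spec (θ b)).1)]
        rw [mul_assoc]
    have hefe : (star a * a) * (star b * b) * (star a * a) = (star b * b) * (star a * a) := by
      rw [hT.right_normal _ _ _ hee hff hee, mul_assoc, hee]
    -- key: a * star b * a = a
    have P : a * star b * a = a := by
      calc a * star b * a
          = (b * (star a * a)) * star b * (b * (star a * a)) := by rw [← hab]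
        _ = b * ((star a * a) * (star b * b) * (star a * a)) := by simp only [mul_assoc]
        _ = b * ((star b * b) * (star a * a)) := by rw [hefe]
        _ = (b * (star b * b)) * (star a * a) := (mul_assoc _ _ _).symm
        _ = b * (star a * a) := by rw [← mul_assoc b, hbb]
        _ = a := hab.symm
    refine ⟨star b * a * star b, ⟨?_, ?_⟩, ?_, ?_⟩
    · calc a * (star b * a * star b) * a
          = (a * star b * a) * (star b * a) := by simp only [mul_assoc]
        _ = a * (star b * a) := by rw [P]
        _ = a := by rw [← mul_assoc, P]
    · calc (star b * a * star b) * a * (star b * a * star b)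
          = star b * ((a * star b * a) * (star b * a * star b)) := by simp only [mul_assoc]
        _ = star b * (a * (star b * a * star b)) := by rw [P]
        _ = star b * ((a * star b * a) * star b) := by simp only [mul_assoc]
        _ = star b * (a * star b) := by rw [P]
        _ = star b * a * star b := by rw [mul_assoc]
    · calc b * (star b * a * star b) * b
          = b * star b * (a * (star b * b)) := by simp only [mul_assoc]
        _ = b * star b * b := by rw [← hba]
        _ = b := hbb
    · calc (star b * a * star b) * b * (star b * a * star b)
          = star b * a * ((star b * b * star b) * (a * star b)) := by simp only [mul_assoc]
        _ = star b * a * (star b * (a * star b)) := by rw [hbsb]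
        _ = star b * ((a * star b * a) * star b) := by simp only [mul_assoc]
        _ = star b * (a * star b) := by rw [P]
        _ = star b * a * star b := by rw [mul_assoc]
  · rintro ⟨t, ⟨hata, htat⟩, hbtb, htbt⟩
    have ha : θ a = inv (θ t) :=
      hS.inv_unique _ _ ⟨by rw [← hhom, ← hhom, htat], by rw [← hhom, ← hhom, hata]⟩
    have hb : θ b = inv (θ t) :=
      hS.inv_unique _ _ ⟨by rw [← hhom, ← hhom, htbt], by rw [← hhom, ← hhom, hbtb]⟩
    rw [ha, hb]
end

section
/- Let T be a right generalized inverse ∗-semigroup, S an inverse semigroup, and θ : T → S a semigroup homomorphism whose kernel is γ (i.e. for all a, b ∈ T, θ(a) = θ(b) iff V(a) ∩ V(b) ≠ ∅) and whose image is a left ideal of S (s·x is in the range of θ whenever s ∈ S and x is in the range of θ). Then θ is étale: for every idempotent e of T, θ restricts to a bijection from T·e = {a ∈ T : a·e = a} onto S·θ(e) = {s ∈ S : s·θ(e) = s}. -/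
/-- Proposition 2.4(3): a homomorphism whose kernel is γ and whose image is a left
ideal is étale. -/
theorem etale_of_kernel_gamma_image_ideal {T S : Type*} [Semigroup T] [Semigroup S]
    (hT : IsRGIS T) (star : T → T) (hstar : IsRightStar T star)
    (inv : S → S) (hS : IsInverseSemigroup S inv)
    (θ : T → S) (hhom : ∀ a b : T, θ (a * b) = θ a * θ b)
    (hker : ∀ a b : T, θ a = θ b ↔ GammaRel a b)
    (hideal : ∀ s x : S, (∃ t : T, θ t = x) → ∃ u : T, θ u = s * x) :
    IsEtaleHom θ := by
  intro e he
  constructor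
  · -- injectivity on T·e
    intro a b hae hbe hab
    obtain ⟨t, ⟨hata, htat⟩, ⟨hbtb, htbt⟩⟩ := (hker a b).mp hab
    -- relevant idempotents
    have hat : IsIdem (a * t) := by
      show a * t * (a * t) = a * t
      rw [← mul_assoc, hata]
    have hbt : IsIdem (b * t) := by
      show b * t * (b * t) = b * t
      rw [← mul_assoc, hbtb]
    have hta : IsIdem (t * a) := by
      show t * a * (t * a) = t * a
      rw [← mul_assoc, htat]
    have htb : IsIdem (t * b) := by
      show t * b * (t * b) = t * b
      rw [← mul_assoc, htbt]
    -- step 1 : a*t = b*t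
    have h1 : (a * t) * (b * t) = a * t := by
      rw [mul_assoc a t (b * t), ← mul_assoc t b t, htbt]
    have h2 : (b * t) * (a * t) = b * t := by
      rw [mul_assoc b t (a * t), ← mul_assoc t a t, htat]
    have hatbt : a * t = b * t := by
      have := hT.right_normal (a * t) (b * t) (a * t) hat hbt hat
      rw [h1, h2] at this
      have hat' : a * t * (a * t) = a * t := hat
      rw [hat', h2] at this
      exact this
    -- step 2 : t*a = t*b
    have hue : (t * a) * e = t * a := by rw [mul_assoc, hae]
    have hve : (t * b) * e = t * b := by rw [mul_assoc, hbe]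
    have h3 : (t * b) * (t * a) = t * a := by
      rw [mul_assoc t b (t * a), ← mul_assoc b t a, ← hatbt, ← mul_assoc t (a * t) a,
        ← mul_assoc t a t, htat]
    have h4 : (t * a) * (t * b) = t * b := by
      rw [mul_assoc t a (t * b), ← mul_assoc a t b, hatbt, ← mul_assoc t (b * t) b,
        ← mul_assoc t b t, htbt]
    have htatb : t * a = t * b := by
      have := hT.right_normal (t * b) (t * a) e htb hta he
      rw [h3, h4] at this
      rw [← hue, ← hve, this]
    -- conclude
    calc a = a * t * a := hata.symm
      _ = b * t * a := by rw [hatbt]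
      _ = b * (t * a) := by rw [mul_assoc]
      _ = b * (t * b) := by rw [htatb]
      _ = b := by rw [← mul_assoc, hbtb]
  · -- surjectivity onto S·θ(e)
    intro s hs
    obtain ⟨u, hu⟩ := hideal s (θ e) ⟨e, rfl⟩
    refine ⟨u * e, ?_, ?_⟩
    · rw [mul_assoc, he]
    · rw [hhom, hu, mul_assoc, ← hhom, he, hs]
end

section
/- Let (S, X, p) be a left étale action of an inverse semigroup S. Then S∗X, with multiplication (s,x)·(t,y) = (s·t, ((s·t)⁻¹·(s·t))·y) and unary operation (s,x)∗ = (s⁻¹, s·x), is a well-defined right generalized inverse ∗-semigroup: the multiplication and ∗ map S∗X into S∗X, the multiplication is associative, every element is regular with (s,x)∗ ∈ V((s,x)), the operations satisfy (S1)–(S4), the idempotents of S∗X are precisely the elements of the form (p(x), x) for x ∈ X, the product of any two idempotents is idempotent, and idempotents satisfy E·F·G = F·E·G. -/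
section SX

variable {S X : Type*} [Semigroup S]

/-- Membership in `S∗X = {(s,x) : s⁻¹s = p(x)}`. -/
def memSX (inv : S → S) (p : X → S) (a : S × X) : Prop :=
  inv a.1 * a.1 = p a.2

/-- The multiplication `(s,x)(t,y) = (st, ((st)⁻¹(st))·y)` on `S∗X`. -/
def mulSX (inv : S → S) (act : S → X → X) (a b : S × X) : S × X :=
  (a.1 * b.1, act (inv (a.1 * b.1) * (a.1 * b.1)) b.2)

/-- The unary operation `(s,x)∗ = (s⁻¹, s·x)` on `S∗X`. -/
def starSX (inv : S → S) (act : S → X → X) (a : S × X) : S × X :=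
  (inv a.1, act a.1 a.2)

end SX

section InvLemmas
variable {S : Type*} [Semigroup S] {inv : S → S}

lemma inv_i1 (hS : IsInverseSemigroup S inv) (s : S) : s * inv s * s = s := (hS.inv_spec s).1
lemma inv_i2 (hS : IsInverseSemigroup S inv) (s : S) : inv s * s * inv s = inv s := (hS.inv_spec s).2

lemma inv_invol (hS : IsInverseSemigroup S inv) (s : S) : inv (inv s) = s :=
  (hS.inv_unique (inv s) s ⟨inv_i2 hS s, inv_i1 hS s⟩).symm

lemma inv_idem (hS : IsInverseSemigroup S inv) {e : S} (he : e * e = e) : inv e = e :=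
  (hS.inv_unique e e ⟨by rw [he, he], by rw [he, he]⟩).symm

lemma idemR (hS : IsInverseSemigroup S inv) (s : S) : (s * inv s) * (s * inv s) = s * inv s := by
  calc (s * inv s) * (s * inv s) = (s * inv s * s) * inv s := by simp only [mul_assoc]
    _ = s * inv s := by rw [inv_i1 hS]

lemma idemL (hS : IsInverseSemigroup S inv) (s : S) : (inv s * s) * (inv s * s) = inv s * s := by
  calc (inv s * s) * (inv s * s) = (inv s * s * inv s) * s := by simp only [mul_assoc]
    _ = inv s * s := by rw [inv_i2 hS]

lemma idem_mul_idem (hS : IsInverseSemigroup S inv) {e f : S} (he : e * e = e) (hf : f * f = f) :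
    (e * f) * (e * f) = e * f := by
  set x := inv (e * f) with hx
  have h1 : (e * f) * x * (e * f) = e * f := inv_i1 hS (e * f)
  have h2 : x * (e * f) * x = x := inv_i2 hS (e * f)
  have hfxe : f * x * e = x := by
    apply hS.inv_unique (e * f)
    constructor
    · calc (e * f) * (f * x * e) * (e * f) = e * ((f * f) * x * (e * e)) * f := by
            simp only [mul_assoc]
        _ = e * (f * x * e) * f := by rw [hf, he]
        _ = (e * f) * x * (e * f) := by simp only [mul_assoc]
        _ = e * f := h1
    · calc (f * x * e) * (e * f) * (f * x * e) = f * (x * (e * e) * (f * f) * x) * e := by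
            simp only [mul_assoc]
        _ = f * (x * e * f * x) * e := by rw [he, hf]
        _ = f * (x * (e * f) * x) * e := by simp only [mul_assoc]
        _ = f * x * e := by rw [h2]
  have hxx : x * x = x := by
    have h3 : (f * x * e) * (f * x * e) = f * x * e := by
      calc (f * x * e) * (f * x * e) = f * (x * (e * f) * x) * e := by simp only [mul_assoc]
        _ = f * x * e := by rw [h2]
    rw [hfxe] at h3; exact h3
  have hef : e * f = x := by
    have := hS.inv_unique x (e * f) ⟨h2, h1⟩
    rw [this, inv_idem hS hxx]
  rw [hef]; exact hxx

lemma idem_comm (hS : IsInverseSemigroup S inv) {e f : S} (he : e * e = e) (hf : f * f = f) :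
    e * f = f * e := by
  have hef : (e * f) * (e * f) = e * f := idem_mul_idem hS he hf
  have h1 : f * e = inv (e * f) := by
    apply hS.inv_unique
    constructor
    · calc (e * f) * (f * e) * (e * f) = e * ((f * f) * (e * e)) * f := by simp only [mul_assoc]
        _ = e * (f * e) * f := by rw [hf, he]
        _ = (e * f) * (e * f) := by simp only [mul_assoc]
        _ = e * f := hef
    · calc (f * e) * (e * f) * (f * e) = f * ((e * e) * (f * f)) * e := by simp only [mul_assoc]
        _ = f * (e * f) * e := by rw [he, hf]
        _ = (f * e) * (f * e) := by simp only [mul_assoc]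
        _ = f * e := idem_mul_idem hS hf he
  rw [h1, inv_idem hS hef]

lemma inv_mul (hS : IsInverseSemigroup S inv) (s t : S) : inv (s * t) = inv t * inv s := by
  symm; apply hS.inv_unique
  constructor
  · calc (s * t) * (inv t * inv s) * (s * t)
        = s * ((t * inv t) * (inv s * s)) * t := by simp only [mul_assoc]
      _ = s * ((inv s * s) * (t * inv t)) * t := by rw [idem_comm hS (idemR hS t) (idemL hS s)]
      _ = (s * inv s * s) * (t * inv t * t) := by simp only [mul_assoc]
      _ = s * t := by rw [inv_i1 hS, inv_i1 hS]
  · calc (inv t * inv s) * (s * t) * (inv t * inv s)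
        = inv t * ((inv s * s) * (t * inv t)) * inv s := by simp only [mul_assoc]
      _ = inv t * ((t * inv t) * (inv s * s)) * inv s := by
          rw [idem_comm hS (idemL hS s) (idemR hS t)]
      _ = (inv t * t * inv t) * (inv s * s * inv s) := by simp only [mul_assoc]
      _ = inv t * inv s := by rw [inv_i2 hS, inv_i2 hS]

lemma key1 (hS : IsInverseSemigroup S inv) (s t : S) :
    inv (s * t) * (s * t) * (inv t * t) = inv (s * t) * (s * t) := by
  rw [inv_mul hS]
  calc (inv t * inv s) * (s * t) * (inv t * t)
      = inv t * ((inv s * s) * (t * inv t)) * t := by simp only [mul_assoc]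
    _ = inv t * ((t * inv t) * (inv s * s)) * t := by
        rw [idem_comm hS (idemL hS s) (idemR hS t)]
    _ = (inv t * t * inv t) * ((inv s * s) * t) := by simp only [mul_assoc]
    _ = inv t * ((inv s * s) * t) := by rw [inv_i2 hS]
    _ = (inv t * inv s) * (s * t) := by simp only [mul_assoc]

lemma aia (hS : IsInverseSemigroup S inv) (s : S) : s * (inv s * s) = s := by
  rw [← mul_assoc, inv_i1 hS]

lemma iai (hS : IsInverseSemigroup S inv) (s : S) : inv s * (s * inv s) = inv s := by
  rw [← mul_assoc, inv_i2 hS]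

end InvLemmas

/-- Proposition 2.5(1): `S∗X` is a well-defined right generalized inverse ∗-semigroup,
whose idempotents are precisely the pairs `(p x, x)`. -/
theorem sx_is_rgis_star {S X : Type*} [Semigroup S]
    (inv : S → S) (hS : IsInverseSemigroup S inv)
    (p : X → S) (act : S → X → X)
    (hp : ∀ x : X, IsIdem (p x))
    (hassoc : ∀ (s t : S) (x : X), act (s * t) x = act s (act t x))
    (he1 : ∀ x : X, act (p x) x = x)
    (he2 : ∀ (s : S) (x : X), p (act s x) = s * p x * inv s) :
    -- closure of the operations
    (∀ a b : S × X, memSX inv p a → memSX inv p b → memSX inv p (mulSX inv act a b)) ∧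
    (∀ a : S × X, memSX inv p a → memSX inv p (starSX inv act a)) ∧
    -- associativity
    (∀ a b c : S × X, memSX inv p a → memSX inv p b → memSX inv p c →
      mulSX inv act (mulSX inv act a b) c = mulSX inv act a (mulSX inv act b c)) ∧
    -- (S1)
    (∀ a : S × X, memSX inv p a → starSX inv act (starSX inv act a) = a) ∧
    -- (S2): every element is regular with `a∗ ∈ V(a)`
    (∀ a : S × X, memSX inv p a →
      mulSX inv act (mulSX inv act a (starSX inv act a)) a = a ∧
      mulSX inv act (mulSX inv act (starSX inv act a) a) (starSX inv act a) =
        starSX inv act a) ∧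
    -- (S3)
    (∀ a b : S × X, memSX inv p a → memSX inv p b →
      starSX inv act (mulSX inv act a b) =
        mulSX inv act (starSX inv act b)
          (starSX inv act (mulSX inv act (mulSX inv act a b) (starSX inv act b)))) ∧
    -- (S4)
    (∀ a : S × X, memSX inv p a → mulSX inv act a a = a → starSX inv act a = a) ∧
    -- idempotents are precisely the pairs (p x, x)
    (∀ a : S × X, memSX inv p a → (mulSX inv act a a = a ↔ ∃ x : X, a = (p x, x))) ∧
    -- the product of two idempotents is idempotent
    (∀ a b : S × X, memSX inv p a → memSX inv p b →
      mulSX inv act a a = a → mulSX inv act b b = b →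
      mulSX inv act (mulSX inv act a b) (mulSX inv act a b) = mulSX inv act a b) ∧
    -- right normality for idempotents
    (∀ a b c : S × X, memSX inv p a → memSX inv p b → memSX inv p c →
      mulSX inv act a a = a → mulSX inv act b b = b → mulSX inv act c c = c →
      mulSX inv act (mulSX inv act a b) c = mulSX inv act (mulSX inv act b a) c) := by
  have hpe : ∀ x : X, p x * p x = p x := hp
  have hback : ∀ x : X, mulSX inv act (p x, x) (p x, x) = (p x, x) := by
    intro x
    show (p x * p x, act (inv (p x * p x) * (p x * p x)) x) = (p x, x)
    rw [hpe x, inv_idem hS (hpe x), hpe x, he1]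
  have hfwd : ∀ (s : S) (x : X), inv s * s = p x →
      mulSX inv act (s, x) (s, x) = (s, x) → s = p x := by
    intro s x hm hid
    have h1 : s * s = s := congrArg Prod.fst hid
    rw [← hm, inv_idem hS h1, h1]
  refine ⟨?_, ?_, ?_, ?_, ?_, ?_, ?_, ?_, ?_, ?_⟩
  · -- closure of multiplication
    rintro ⟨s, x⟩ ⟨t, y⟩ ha hb
    have hb' : inv t * t = p y := hb
    show inv (s * t) * (s * t) = p (act (inv (s * t) * (s * t)) y)
    rw [he2, ← hb', inv_idem hS (idemL hS (s * t)), key1 hS s t, idemL hS (s * t)]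
  · -- closure of star
    rintro ⟨s, x⟩ ha
    have ha' : inv s * s = p x := ha
    show inv (inv s) * inv s = p (act s x)
    rw [he2, ← ha', inv_invol hS, ← mul_assoc, inv_i1 hS]
  · -- associativity
    rintro ⟨s, x⟩ ⟨t, y⟩ ⟨u, z⟩ _ _ _
    show ((s * t) * u, act (inv ((s * t) * u) * ((s * t) * u)) z)
        = (s * (t * u), act (inv (s * (t * u)) * (s * (t * u)))
            (act (inv (t * u) * (t * u)) z))
    simp only [mul_assoc]
    rw [← hassoc, key1 hS s (t * u)]
  · -- (S1)
    rintro ⟨s, x⟩ ha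
    have ha' : inv s * s = p x := ha
    show (inv (inv s), act (inv s) (act s x)) = (s, x)
    rw [inv_invol hS, ← hassoc, ha', he1]
  · -- (S2)
    rintro ⟨s, x⟩ ha
    have ha' : inv s * s = p x := ha
    constructor
    · show (s * inv s * s, act (inv (s * inv s * s) * (s * inv s * s)) x) = (s, x)
      rw [inv_i1 hS, ha', he1]
    · show (inv s * s * inv s,
          act (inv (inv s * s * inv s) * (inv s * s * inv s)) (act s x)) = (inv s, act s x)
      rw [inv_i2 hS, inv_invol hS, ← hassoc, inv_i1 hS]
  · -- (S3)
    rintro ⟨s, x⟩ ⟨t, y⟩ ha hb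
    have h1 : inv t * inv (s * t * inv t) = inv (s * t) := by
      calc inv t * inv (s * t * inv t)
          = inv t * (t * (inv t * inv s)) := by
            rw [inv_mul hS (s * t) (inv t), inv_invol hS, inv_mul hS s t]
        _ = (inv t * t * inv t) * inv s := by simp only [mul_assoc]
        _ = inv t * inv s := by rw [inv_i2 hS]
        _ = inv (s * t) := (inv_mul hS s t).symm
    show (inv (s * t), act (s * t) (act (inv (s * t) * (s * t)) y))
        = (inv t * inv (s * t * inv t),
            act (inv (inv t * inv (s * t * inv t)) * (inv t * inv (s * t * inv t)))
              (act (s * t * inv t)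
                (act (inv (s * t * inv t) * (s * t * inv t)) (act t y))))
    rw [Prod.mk.injEq]
    refine ⟨h1.symm, ?_⟩
    rw [h1, inv_invol hS]
    simp only [← hassoc]
    congr 1
    rw [aia hS (s * t)]
    symm
    calc s * t * inv (s * t) * (s * t * inv t * (inv (s * t * inv t) * (s * t * inv t) * t))
        = s * t * inv (s * t)
            * ((s * t * inv t * (inv (s * t * inv t) * (s * t * inv t))) * t) := by
          simp only [mul_assoc]
      _ = s * t * inv (s * t) * (s * t * inv t * t) := by rw [aia hS (s * t * inv t)]
      _ = (s * t * inv (s * t) * (s * t)) * (inv t * t) := by simp only [mul_assoc]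
      _ = s * t * (inv t * t) := by rw [inv_i1 hS]
      _ = s * (t * inv t * t) := by simp only [mul_assoc]
      _ = s * t := by rw [inv_i1 hS]
  · -- (S4)
    rintro ⟨s, x⟩ ha hid
    have ha' : inv s * s = p x := ha
    have h1 : s * s = s := congrArg Prod.fst hid
    have h2 : s = p x := by rw [← ha', inv_idem hS h1, h1]
    show (inv s, act s x) = (s, x)
    rw [inv_idem hS h1, h2, he1]
  · -- idempotents are the pairs (p x, x)
    rintro ⟨s, x⟩ ha
    constructor
    · intro hid
      exact ⟨x, by rw [hfwd s x ha hid]⟩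
    · rintro ⟨x', hx'⟩
      rw [hx']
      exact hback x'
  · -- products of idempotents
    rintro ⟨s, x⟩ ⟨t, y⟩ ha hb hia hib
    have h1 : s = p x := hfwd s x ha hia
    have h2 : t = p y := hfwd t y hb hib
    subst h1; subst h2
    have hE : (p x * p y) * (p x * p y) = p x * p y := idem_mul_idem hS (hpe x) (hpe y)
    have hE2 : inv (p x * p y) * (p x * p y) = p x * p y := by rw [inv_idem hS hE, hE]
    have hpz : p (act (p x * p y) y) = p x * p y := by
      rw [he2, inv_idem hS hE]
      calc (p x * p y) * p y * (p x * p y)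
          = p x * (p y * p y) * (p x * p y) := by simp only [mul_assoc]
        _ = p x * p y * (p x * p y) := by rw [hpe y]
        _ = p x * p y := hE
    have hz : mulSX inv act (p x, x) (p y, y)
        = (p (act (p x * p y) y), act (p x * p y) y) := by
      show (p x * p y, act (inv (p x * p y) * (p x * p y)) y) = _
      rw [hE2, hpz]
    rw [hz]
    exact hback (act (p x * p y) y)
  · -- right normality
    rintro ⟨s, x⟩ ⟨t, y⟩ ⟨u, w⟩ ha hb hc hia hib hic
    have h1 : s = p x := hfwd s x ha hia
    have h2 : t = p y := hfwd t y hb hib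
    have h3 : u = p w := hfwd u w hc hic
    subst h1; subst h2; subst h3
    have hcomm : p x * p y = p y * p x := idem_comm hS (hpe x) (hpe y)
    show ((p x * p y) * p w, act (inv ((p x * p y) * p w) * ((p x * p y) * p w)) w)
        = ((p y * p x) * p w, act (inv ((p y * p x) * p w) * ((p y * p x) * p w)) w)
    rw [hcomm]
end

section
/- Let T be a right generalized inverse ∗-semigroup, S an inverse semigroup, θ : T → S an étale homomorphism, e an idempotent of T, and s, t ∈ S. Suppose b ∈ T satisfies b∗·b ≤ e and θ(b) = t·θ(e); suppose a ∈ T satisfies a∗·a ≤ b·b∗ and θ(a) = s·θ(b·b∗); and suppose c ∈ T satisfies c∗·c ≤ e and θ(c) = (s·t)·θ(e), where ≤ denotes the natural partial order on T. Then c = a·b, and consequently c·c∗ = a·a∗. (This is the key computation showing that the prescription s·e = t·t∗, where t∗·t ≤ e and θ(t) = s·θ(e), defines a left étale action of S on the idempotents of T.) -/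
/-- Proposition 2.6(1), the key computation: with `b, a, c` as prescribed, `c = a·b` and
hence `c·c∗ = a·a∗`. -/
theorem etale_action_key_computation {T S : Type*} [Semigroup T] [Semigroup S]
    (hT : IsRGIS T) (star : T → T) (hstar : IsRightStar T star)
    (inv : S → S) (hS : IsInverseSemigroup S inv)
    (θ : T → S) (hhom : ∀ a b : T, θ (a * b) = θ a * θ b)
    (het : IsEtaleHom θ)
    (e : T) (he : IsIdem e) (s t : S) (a b c : T)
    (hb1 : NatLe (star b * b) e) (hb2 : θ b = t * θ e)
    (ha1 : NatLe (star a * a) (b * star b)) (ha2 : θ a = s * θ (b * star b))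
    (hc1 : NatLe (star c * c) e) (hc2 : θ c = (s * t) * θ e) :
    c = a * b ∧ c * star c = a * star a := by
  -- key lemma: if star x * x ≤ y (natural order) with y idempotent, then x * y = x
  have key : ∀ x y : T, IsIdem y → NatLe (star x * x) y → x * y = x := by
    rintro x y hy ⟨f, g, hf, hg, h1, h2⟩
    have hx : x * (star x * x) = x := by
      have := (hstar.s2 x).1
      rw [← mul_assoc]; exact this
    calc x * y = x * (star x * x) * y := by rw [hx]
      _ = x * (f * y) * y := by rw [h1]
      _ = x * (f * (y * y)) := by simp [mul_assoc]
      _ = x * (f * y) := by rw [hy]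
      _ = x * (star x * x) := by rw [h1]
      _ = x := hx
  -- b * star b is idempotent
  have hbb : IsIdem (b * star b) := by
    have h := (hstar.s2 b).1
    show b * star b * (b * star b) = b * star b
    calc b * star b * (b * star b) = (b * star b * b) * star b := by
          simp [mul_assoc]
      _ = b * star b := by rw [h]
  have hce : c * e = c := key c e he hc1
  have hbe : b * e = b := key b e he hb1
  have habb : a * (b * star b) = a := key a (b * star b) hbb ha1
  -- θ c = θ (a * b)
  have hbsb : b * star b * b = b := (hstar.s2 b).1
  have hθ : θ c = θ (a * b) := by
    calc θ c = (s * t) * θ e := hc2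
      _ = s * (t * θ e) := by rw [mul_assoc]
      _ = s * θ b := by rw [hb2]
      _ = s * θ (b * star b * b) := by rw [hbsb]
      _ = s * (θ (b * star b) * θ b) := by rw [hhom]
      _ = (s * θ (b * star b)) * θ b := by rw [mul_assoc]
      _ = θ a * θ b := by rw [ha2]
      _ = θ (a * b) := (hhom a b).symm
  have habe : (a * b) * e = a * b := by rw [mul_assoc, hbe]
  have hcab : c = a * b := (het e he).1 c (a * b) hce habe hθ
  refine ⟨hcab, ?_⟩
  -- star (a * b) = star b * star a
  have habsb : a * b * star b = a := by rw [mul_assoc]; exact habb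
  have hstab : star (a * b) = star b * star a := by
    rw [hstar.s3 a b, habsb]
  calc c * star c = (a * b) * (star b * star a) := by rw [hcab, hstab]
    _ = (a * (b * star b)) * star a := by simp [mul_assoc]
    _ = a * star a := by rw [habb]
end

section
/- Let T be a right generalized inverse ∗-semigroup, S an inverse semigroup, and θ : T → S an étale homomorphism. Then the map α : T → {(s, e) ∈ S × E(T) : s⁻¹·s = θ(e)} defined by α(t) = (θ(t), t∗·t) is well defined (i.e. θ(t)⁻¹·θ(t) = θ(t∗·t) and t∗·t is idempotent) and is a bijection, and the composition of α with the projection (s,e) ↦ s equals θ. -/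
/-- Proposition 2.7(2): the map `α(t) = (θ(t), t∗·t)` into
`{(s,e) ∈ S × E(T) : s⁻¹·s = θ(e)}` is well defined and bijective, and composing it
with the projection `(s,e) ↦ s` gives back `θ`. -/
theorem etale_coordinates_bijection {T S : Type*} [Semigroup T] [Semigroup S]
    (hT : IsRGIS T) (star : T → T) (hstar : IsRightStar T star)
    (inv : S → S) (hS : IsInverseSemigroup S inv)
    (θ : T → S) (hhom : ∀ a b : T, θ (a * b) = θ a * θ b)
    (het : IsEtaleHom θ) :
    (∀ t : T, inv (θ t) * θ t = θ (star t * t) ∧ IsIdem (star t * t)) ∧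
    (∀ t₁ t₂ : T, θ t₁ = θ t₂ → star t₁ * t₁ = star t₂ * t₂ → t₁ = t₂) ∧
    (∀ (s : S) (e : T), IsIdem e → inv s * s = θ e →
      ∃ t : T, θ t = s ∧ star t * t = e) ∧
    (∀ t : T, ((θ t, star t * t) : S × T).1 = θ t) := by

  have key : ∀ t : T, inv (θ t) = θ (star t) := by
    intro t
    refine (hS.inv_unique _ _ ⟨?_, ?_⟩).symm
    · rw [← hhom, ← hhom, (hstar.s2 t).1]
    · rw [← hhom, ← hhom, (hstar.s2 t).2]
  have idem : ∀ t : T, IsIdem (star t * t) := by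
    intro t
    show star t * t * (star t * t) = star t * t
    calc star t * t * (star t * t) = star t * (t * star t * t) := by
          simp [mul_assoc]
      _ = star t * t := by rw [(hstar.s2 t).1]
  have part1 : ∀ t : T, inv (θ t) * θ t = θ (star t * t) ∧ IsIdem (star t * t) :=
    fun t => ⟨by rw [key, hhom], idem t⟩
  refine ⟨part1, ?_, ?_, fun t => rfl⟩
  · intro t₁ t₂ hθ he
    refine (het (star t₁ * t₁) (idem t₁)).1 t₁ t₂ ?_ ?_ hθ
    · rw [← mul_assoc]; exact (hstar.s2 t₁).1
    · rw [he, ← mul_assoc]; exact (hstar.s2 t₂).1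
  · intro s e he hse
    have hs : s * θ e = s := by
      rw [← hse, ← mul_assoc, (hS.inv_spec s).1]
    obtain ⟨a, hae, has⟩ := (het e he).2 s hs
    refine ⟨a, has, ?_⟩
    have hf : θ (star a * a) = θ e := by rw [← (part1 a).1, has, hse]
    have hfe : star a * a * e = star a * a := by rw [mul_assoc, hae]
    exact (het e he).1 _ _ hfe he hf
end
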